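/- Let X be a compact metric space and f : X → X a continuous map. An invariant set A ⊆ X is an attractor if and only if there exists a compact neighborhood N of A such that there is no backward orbit γ : ℕ → X with γ(0) ∈ N \ A and γ(k) ∈ N for all k ∈ ℕ. Moreover, for such N one has A = Inv(N). -/

import Mathlib

open Set

/-- The maximal invariant set in `U`: the union of all subsets `S ⊆ U` with `f '' S = S`. -/
def MaxInv {Y : Type*} (f : Y → Y) (U : Set Y) : Set Y :=
  ⋃₀ {S : Set Y | S ⊆ U ∧ f '' S = S}

/-- The maximal forward invariant set in `U`: the union of all subsets `S ⊆ U`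
with `f '' S ⊆ S`. -/
def MaxInvPlus {Y : Type*} (f : Y → Y) (U : Set Y) : Set Y :=
  ⋃₀ {S : Set Y | S ⊆ U ∧ f '' S ⊆ S}

/-- The omega-limit set `ω(U) = ⋂_{n ≥ 0} cl (⋃_{m ≥ n} f^[m] '' U)`. -/
def OmegaLim {Y : Type*} [TopologicalSpace Y] (f : Y → Y) (U : Set Y) : Set Y :=
  ⋂ n : ℕ, closure (⋃ m ≥ n, f^[m] '' U)

/-- The alpha-limit set `α(U) = ⋂_{n ≥ 0} cl (⋃_{m ≥ n} (f^[m]) ⁻¹' U)`. -/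
def AlphaLim {Y : Type*} [TopologicalSpace Y] (f : Y → Y) (U : Set Y) : Set Y :=
  ⋂ n : ℕ, closure (⋃ m ≥ n, f^[m] ⁻¹' U)

/-- A trapping region: a forward invariant set `U` with `f^[n] '' cl U ⊆ int U`
for some `n ≥ 1`. -/
def IsTrappingRegion {Y : Type*} [TopologicalSpace Y] (f : Y → Y) (U : Set Y) : Prop :=
  f '' U ⊆ U ∧ ∃ n : ℕ, 1 ≤ n ∧ f^[n] '' closure U ⊆ interior U

/-- An attractor: `A = Inv(U)` for some trapping region `U`. -/
def IsAttractor {Y : Type*} [TopologicalSpace Y] (f : Y → Y) (A : Set Y) : Prop :=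
  ∃ U : Set Y, IsTrappingRegion f U ∧ A = MaxInv f U

/-- An attracting neighborhood: `ω(U) ⊆ int U`. -/
def IsAttractingNbhd {Y : Type*} [TopologicalSpace Y] (f : Y → Y) (U : Set Y) : Prop :=
  OmegaLim f U ⊆ interior U

/-- A repelling region: a backward invariant set `U` with `(f^[n]) ⁻¹' cl U ⊆ int U`
for some `n ≥ 1`. -/
def IsRepellingRegion {Y : Type*} [TopologicalSpace Y] (f : Y → Y) (U : Set Y) : Prop :=
  f ⁻¹' U ⊆ U ∧ ∃ n : ℕ, 1 ≤ n ∧ f^[n] ⁻¹' closure U ⊆ interior U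

/-- A repeller: `R = Inv⁺(U)` for some repelling region `U`. -/
def IsRepeller {Y : Type*} [TopologicalSpace Y] (f : Y → Y) (R : Set Y) : Prop :=
  ∃ U : Set Y, IsRepellingRegion f U ∧ R = MaxInvPlus f U

/-- A repelling neighborhood: `α(U) ⊆ int U`. -/
def IsRepellingNbhd {Y : Type*} [TopologicalSpace Y] (f : Y → Y) (U : Set Y) : Prop :=
  AlphaLim f U ⊆ interior U

/-- A backward orbit: a sequence `γ : ℕ → Y` with `f (γ (k+1)) = γ k` for all `k`.
A backward orbit through `x` additionally satisfies `γ 0 = x`. -/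
def IsBackwardOrbit {Y : Type*} (f : Y → Y) (γ : ℕ → Y) : Prop :=
  ∀ k : ℕ, f (γ (k + 1)) = γ k

/-- The orbital alpha-limit set `α_o(γ) = ⋂_{n ≥ 0} cl {γ m : m ≥ n}`. -/
def OrbAlpha {Y : Type*} [TopologicalSpace Y] (γ : ℕ → Y) : Set Y :=
  ⋂ n : ℕ, closure (γ '' {m : ℕ | n ≤ m})

/-- The dual repeller of an attractor `A`: `A* = {x : ω(x) ∩ A = ∅}`. -/
def DualRepeller {Y : Type*} [TopologicalSpace Y] (f : Y → Y) (A : Set Y) : Set Y :=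
  {x : Y | OmegaLim f {x} ∩ A = ∅}

/-- The dual attractor of a repeller `R`:
`R* = {x : ∃ backward orbit γ through x with α_o(γ) ∩ R = ∅}`. -/
def DualAttractor {Y : Type*} [TopologicalSpace Y] (f : Y → Y) (R : Set Y) : Set Y :=
  {x : Y | ∃ γ : ℕ → Y, γ 0 = x ∧ IsBackwardOrbit f γ ∧ OrbAlpha γ ∩ R = ∅}
set_option linter.unusedSectionVars false

namespace Stmt11Aux
section Aux
variable {Y : Type*} (f : Y → Y)

lemma maxInv_subset (U : Set Y) : MaxInv f U ⊆ U :=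
  Set.sUnion_subset fun _ hS => hS.1

lemma subset_maxInv {A U : Set Y} (hA : f '' A = A) (hAU : A ⊆ U) : A ⊆ MaxInv f U :=
  Set.subset_sUnion_of_mem ⟨hAU, hA⟩

lemma iterate_image_eq {S : Set Y} (hS : f '' S = S) (k : ℕ) : f^[k] '' S = S := by
  induction k with
  | zero => simp
  | succ n ih =>
      rw [Function.iterate_succ', Set.image_comp, ih, hS]

/-- From an invariant set, extract a backward orbit staying in it. -/
lemma exists_backward_orbit {S : Set Y} (hS : f '' S = S) {x : Y} (hx : x ∈ S) :
    ∃ γ : ℕ → Y, γ 0 = x ∧ IsBackwardOrbit f γ ∧ ∀ k, γ k ∈ S := by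
  have hpre : ∀ y : S, ∃ z : S, f z = y := by
    rintro ⟨y, hy⟩
    rw [← hS] at hy
    obtain ⟨z, hz, hfz⟩ := hy
    exact ⟨⟨z, hz⟩, hfz⟩
  choose G hG using hpre
  refine ⟨fun k => (G^[k] ⟨x, hx⟩ : S), rfl, fun k => ?_, fun k => (G^[k] ⟨x, hx⟩).2⟩
  show f (G^[k+1] ⟨x, hx⟩ : S) = (G^[k] ⟨x, hx⟩ : S)
  rw [Function.iterate_succ_apply']
  exact hG (G^[k] ⟨x, hx⟩)

lemma backward_iterate {γ : ℕ → Y} (hγ : IsBackwardOrbit f γ) (k j : ℕ) :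
    f^[j] (γ (k + j)) = γ k := by
  induction j with
  | zero => rfl
  | succ n ih =>
      have : f^[n] (f (γ (k + n + 1))) = γ k := by rw [hγ (k + n)]; exact ih
      rw [← this, ← Function.iterate_succ_apply]
      rfl
end Aux

section Diag
variable {X : Type*} [MetricSpace X] [CompactSpace X]

/-- Diagonal lemma: arbitrarily long partial backward orbits in `N` ending in a
closed set `E` yield a full backward orbit in `N` starting in `E`. -/
lemma diag_lemma (f : X → X) (hf : Continuous f) {N E : Set X}
    (hN : IsClosed N) (hE : IsClosed E)
    (H : ∀ n : ℕ, ∃ k, n ≤ k ∧ ∃ x, (∀ j ≤ k, f^[j] x ∈ N) ∧ f^[k] x ∈ E) :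
    ∃ γ : ℕ → X, IsBackwardOrbit f γ ∧ (∀ j, γ j ∈ N) ∧ γ 0 ∈ E := by
  choose k hk x hxN hxE using H
  set s : ℕ → ℕ → X := fun i j => f^[k i - j] (x i) with hs
  have hsK : ∀ i, s i ∈ {g : ℕ → X | ∀ j, g j ∈ N} := by
    intro i j
    exact hxN i _ (Nat.sub_le _ _)
  have hK : IsCompact {g : ℕ → X | ∀ j : ℕ, g j ∈ N} :=
    isCompact_pi_infinite fun _ => hN.isCompact
  have hle : Filter.map s Filter.atTop ≤ Filter.principal {g : ℕ → X | ∀ j, g j ∈ N} := by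
    rw [Filter.le_principal_iff, Filter.mem_map]
    exact Filter.Eventually.of_forall hsK
  obtain ⟨γ, hγK, hγcl⟩ := hK.exists_clusterPt hle
  -- membership in closed sets eventually satisfied
  have key : ∀ F : Set (ℕ → X), IsClosed F → (∀ᶠ i in Filter.atTop, s i ∈ F) → γ ∈ F := by
    intro F hF hev
    have : ClusterPt γ (Filter.principal F) :=
      hγcl.mono (Filter.le_principal_iff.mpr (Filter.mem_map.mpr hev))
    rw [← mem_closure_iff_clusterPt] at this
    rwa [hF.closure_eq] at this
  refine ⟨γ, fun j => ?_, hγK, ?_⟩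
  · refine key {g | f (g (j + 1)) = g j}
      (isClosed_eq (hf.comp (continuous_apply (j + 1))) (continuous_apply j)) ?_
    filter_upwards [Filter.eventually_ge_atTop (j + 1)] with i hi
    have hik : j + 1 ≤ k i := le_trans hi (hk i)
    show f (f^[k i - (j + 1)] (x i)) = f^[k i - j] (x i)
    rw [← Function.iterate_succ_apply' f]
    congr 1
    omega
  · refine key {g | g 0 ∈ E} (hE.preimage (continuous_apply 0)) ?_
    filter_upwards with i
    show f^[k i - 0] (x i) ∈ E
    simpa using hxE i
end Diag

section Main
variable {X : Type*} [MetricSpace X] [CompactSpace X]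

lemma part2 (f : X → X) (A : Set X) (hinv : f '' A = A)
    (N : Set X) (hAN : A ⊆ interior N)
    (hno : ¬ ∃ γ : ℕ → X, IsBackwardOrbit f γ ∧ γ 0 ∈ N \ A ∧ ∀ k : ℕ, γ k ∈ N) :
    A = MaxInv f N := by
  apply Set.Subset.antisymm
  · exact subset_maxInv f hinv (hAN.trans interior_subset)
  · intro y hy
    obtain ⟨S, ⟨hSN, hSinv⟩, hyS⟩ := hy
    by_contra hyA
    obtain ⟨γ, hγ0, hγb, hγS⟩ := exists_backward_orbit f hSinv hyS
    exact hno ⟨γ, hγb, ⟨hγ0 ▸ hSN hyS, hγ0 ▸ hyA⟩, fun k => hSN (hγS k)⟩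

lemma forward_dir (f : X → X) (hf : Continuous f) (A : Set X)
    (U : Set X) (hfwd : f '' U ⊆ U) (n : ℕ) (hn1 : 1 ≤ n)
    (htrap : f^[n] '' closure U ⊆ interior U) (hA : A = MaxInv f U) :
    IsCompact (closure U) ∧ A ⊆ interior (closure U) ∧
      ¬ ∃ γ : ℕ → X, IsBackwardOrbit f γ ∧ γ 0 ∈ closure U \ A ∧
        ∀ k : ℕ, γ k ∈ closure U := by
  have hAinv : f '' A = A := by
    rw [hA]
    ext y
    simp only [MaxInv, Set.sUnion_eq_biUnion, Set.image_iUnion, Set.mem_iUnion,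
      Set.mem_setOf_eq]
    constructor
    · rintro ⟨S, ⟨h1, h2⟩, hy⟩; exact ⟨S, ⟨h1, h2⟩, h2 ▸ hy⟩
    · rintro ⟨S, ⟨h1, h2⟩, hy⟩; exact ⟨S, ⟨h1, h2⟩, h2.symm ▸ hy⟩
  refine ⟨isClosed_closure.isCompact, ?_, ?_⟩
  · -- A = f^[n] '' A ⊆ interior U ⊆ interior (closure U)
    have h1 : A ⊆ f^[n] '' closure U := by
      rw [← iterate_image_eq f hAinv n]
      exact Set.image_mono ((hA ▸ maxInv_subset f U).trans subset_closure)
    exact (h1.trans htrap).trans (interior_mono subset_closure)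
  · rintro ⟨γ, hγb, ⟨hγ0N, hγ0A⟩, hγN⟩
    -- each γ k is in U
    have hγU : ∀ m, γ m ∈ U := by
      intro m
      have := backward_iterate f hγb m n
      have h2 : f^[n] (γ (m + n)) ∈ interior U := htrap ⟨γ (m + n), hγN _, rfl⟩
      rw [this] at h2
      exact interior_subset h2
    -- the full orbit through γ 0
    set S : Set X := (Set.range fun j => f^[j] (γ 0)) ∪ Set.range γ with hS
    have hfwdit : ∀ j, f^[j] (γ 0) ∈ U := by
      intro j
      induction j with
      | zero => exact hγU 0
      | succ m ih => rw [Function.iterate_succ_apply']; exact hfwd ⟨_, ih, rfl⟩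
    have hSU : S ⊆ U := by
      rintro y (⟨j, rfl⟩ | ⟨m, rfl⟩)
      · exact hfwdit j
      · exact hγU m
    have hSinv : f '' S = S := by
      apply Set.Subset.antisymm
      · rintro y ⟨z, (⟨j, rfl⟩ | ⟨m, rfl⟩), rfl⟩
        · exact Or.inl ⟨j + 1, Function.iterate_succ_apply' f j _⟩
        · cases m with
          | zero => exact Or.inl ⟨1, by simp⟩
          | succ m' => exact Or.inr ⟨m', (hγb m').symm⟩
      · rintro y (⟨j, rfl⟩ | ⟨m, rfl⟩)
        · cases j with
          | zero => exact ⟨γ 1, Or.inr (Set.mem_range_self 1), hγb 0⟩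
          | succ j' =>
              exact ⟨f^[j'] (γ 0), Or.inl (Set.mem_range_self j'),
                (Function.iterate_succ_apply' f j' _).symm⟩
        · exact ⟨γ (m + 1), Or.inr (Set.mem_range_self (m + 1)), hγb m⟩
    have hmem : γ 0 ∈ MaxInv f U :=
      Set.subset_sUnion_of_mem
        (show S ∈ {S : Set X | S ⊆ U ∧ f '' S = S} from ⟨hSU, hSinv⟩)
        (Or.inr (Set.mem_range_self 0))
    rw [← hA] at hmem
    exact hγ0A hmem
end Main

section Back
variable {X : Type*} [MetricSpace X] [CompactSpace X]

lemma backward_dir (f : X → X) (hf : Continuous f) (A : Set X) (hinv : f '' A = A)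
    (N : Set X) (hNcomp : IsCompact N) (hAN : A ⊆ interior N)
    (hno : ¬ ∃ γ : ℕ → X, IsBackwardOrbit f γ ∧ γ 0 ∈ N \ A ∧ ∀ k : ℕ, γ k ∈ N) :
    IsAttractor f A := by
  classical
  have hNc : IsClosed N := hNcomp.isClosed
  set C : Set X := ⋂ k : ℕ, f^[k] ⁻¹' N with hC
  have hmemC : ∀ x, x ∈ C ↔ ∀ k : ℕ, f^[k] x ∈ N := fun x => Set.mem_iInter
  have hCclosed : IsClosed C := isClosed_iInter fun k => hNc.preimage (hf.iterate k)
  have hCN : C ⊆ N := fun x hx => (hmemC x).mp hx 0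
  have hfwdC : f '' C ⊆ C := by
    rintro y ⟨z, hz, rfl⟩
    rw [hmemC]
    intro k
    rw [← Function.iterate_succ_apply]
    exact (hmemC z).mp hz (k + 1)
  have hAit : ∀ (k : ℕ) (a : X), a ∈ A → f^[k] a ∈ A := by
    intro k a ha
    have := iterate_image_eq f hinv k
    rw [← this]
    exact ⟨a, ha, rfl⟩
  have hAC : A ⊆ C := fun a ha =>
    (hmemC a).mpr fun k => interior_subset (hAN (hAit k a ha))
  -- Lemma B: a neighborhood of A trapped forever in N
  have lemB : A ⊆ interior C := by
    by_contra hcon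
    -- then every open V ⊇ A fails to be inside C
    have hfail : ∀ V : Set X, IsOpen V → A ⊆ V → ∃ x ∈ V, ∃ m : ℕ, f^[m] x ∉ N := by
      intro V hVo hAV
      by_contra h
      push_neg at h
      exact hcon (fun a ha => interior_maximal
        (fun x hx => (hmemC x).mpr (h x hx)) hVo (hAV ha))
    -- build arbitrarily long partial backward orbits ending in E
    set E : Set X := N ∩ closure (f ⁻¹' Nᶜ) with hE
    have hEc : IsClosed E := hNc.inter isClosed_closure
    have H : ∀ n : ℕ, ∃ k, n ≤ k ∧ ∃ x, (∀ j ≤ k, f^[j] x ∈ N) ∧ f^[k] x ∈ E := by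
      intro n
      set V : Set X := ⋂ j ∈ Finset.range (n + 1), f^[j] ⁻¹' interior N with hV
      have hVo : IsOpen V :=
        isOpen_biInter_finset fun j _ => isOpen_interior.preimage (hf.iterate j)
      have hAV : A ⊆ V := fun a ha =>
        Set.mem_iInter₂.mpr fun j _ => hAN (hAit j a ha)
      obtain ⟨x, hxV, m, hm⟩ := hfail V hVo hAV
      have hex : ∃ m : ℕ, f^[m] x ∉ N := ⟨m, hm⟩
      set m₀ := Nat.find hex with hm₀
      have hm₀spec : f^[m₀] x ∉ N := Nat.find_spec hex
      have hbelow : ∀ j < m₀, f^[j] x ∈ N := by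
        intro j hj
        by_contra hjN
        exact absurd hjN (Nat.find_min hex hj).elim
      have hxint : ∀ j ≤ n, f^[j] x ∈ interior N := fun j hj =>
        Set.mem_iInter₂.mp hxV j (Finset.mem_range.mpr (Nat.lt_succ_of_le hj))
      have hm₀n : n + 1 ≤ m₀ := by
        by_contra h
        push_neg at h
        exact hm₀spec (interior_subset (hxint m₀ (by omega)))
      refine ⟨m₀ - 1, by omega, x, fun j hj => hbelow j (by omega), ?_⟩
      refine ⟨hbelow _ (by omega), subset_closure ?_⟩
      show f (f^[m₀ - 1] x) ∈ Nᶜ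
      have heq : f (f^[m₀ - 1] x) = f^[m₀] x := by
        rw [← Function.iterate_succ_apply' f]
        congr 1
        omega
      rw [heq]
      exact hm₀spec
    obtain ⟨γ, hγb, hγN, hγ0⟩ := diag_lemma f hf hNc hEc H
    -- γ 0 ∉ A
    have hγ0A : γ 0 ∉ A := by
      intro hmem
      have h1 : γ 0 ∈ f ⁻¹' interior N := hAN (hAit 0 (f (γ 0)) (hinv ▸ ⟨γ 0, hmem, rfl⟩))
      have h2 : (f ⁻¹' interior N) ∩ closure (f ⁻¹' Nᶜ) ⊆ closure ((f ⁻¹' interior N) ∩ f ⁻¹' Nᶜ) :=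
        (isOpen_interior.preimage hf).inter_closure
      have h3 : (f ⁻¹' interior N) ∩ f ⁻¹' Nᶜ = ∅ := by
        ext z
        simp only [Set.mem_inter_iff, Set.mem_preimage, Set.mem_compl_iff,
          Set.mem_empty_iff_false, iff_false, not_and, not_not]
        exact fun ha => interior_subset ha
      have := h2 ⟨h1, hγ0.2⟩
      rw [h3] at this
      simp at this
    exact hno ⟨γ, hγb, ⟨hγ0.1, hγ0A⟩, hγN⟩
  -- Claim A: eventually images of C enter interior C
  have claimA : ∃ n : ℕ, 1 ≤ n ∧ f^[n] '' C ⊆ interior C := by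
    by_contra hcon
    push_neg at hcon
    set E : Set X := N ∩ (interior C)ᶜ with hE
    have hEc : IsClosed E := hNc.inter (isClosed_compl_iff.mpr isOpen_interior)
    have H : ∀ n : ℕ, ∃ k, n ≤ k ∧ ∃ x, (∀ j ≤ k, f^[j] x ∈ N) ∧ f^[k] x ∈ E := by
      intro n
      obtain ⟨y, ⟨x, hxC, rfl⟩, hy⟩ := Set.not_subset.mp (hcon (n + 1) (by omega))
      exact ⟨n + 1, by omega, x, fun j _ => (hmemC x).mp hxC j,
        ⟨(hmemC x).mp hxC (n + 1), hy⟩⟩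
    obtain ⟨γ, hγb, hγN, hγ0⟩ := diag_lemma f hf hNc hEc H
    exact hno ⟨γ, hγb, ⟨hγ0.1, fun h => hγ0.2 (lemB h)⟩, hγN⟩
  obtain ⟨n, hn1, htrap⟩ := claimA
  refine ⟨C, ⟨hfwdC, n, hn1, by rwa [hCclosed.closure_eq]⟩, ?_⟩
  -- A = MaxInv f C
  have hMN : A = MaxInv f N :=
    part2 f A hinv N hAN hno
  apply Set.Subset.antisymm
  · exact subset_maxInv f hinv hAC
  · intro y hy
    rw [hMN]
    obtain ⟨S, ⟨hSC, hSinv⟩, hyS⟩ := hy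
    exact Set.subset_sUnion_of_mem
      (show S ∈ {S : Set X | S ⊆ N ∧ f '' S = S} from ⟨hSC.trans hCN, hSinv⟩) hyS
end Back

end Stmt11Aux

/-- An invariant set is an attractor iff it has a compact
neighborhood admitting no backward orbit through the complement of `A`;
moreover `A = Inv(N)` for such `N`. -/
theorem attractor_iff_no_backward_orbit
    {X : Type*} [MetricSpace X] [CompactSpace X]
    (f : X → X) (hf : Continuous f) (A : Set X) (hinv : f '' A = A) :
    (IsAttractor f A ↔
      ∃ N : Set X, IsCompact N ∧ A ⊆ interior N ∧
        ¬ ∃ γ : ℕ → X, IsBackwardOrbit f γ ∧ γ 0 ∈ N \ A ∧ ∀ k : ℕ, γ k ∈ N) ∧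
    (∀ N : Set X, IsCompact N → A ⊆ interior N →
      (¬ ∃ γ : ℕ → X, IsBackwardOrbit f γ ∧ γ 0 ∈ N \ A ∧ ∀ k : ℕ, γ k ∈ N) →
      A = MaxInv f N) := by
  constructor
  · constructor
    · rintro ⟨U, ⟨hfwd, n, hn1, htrap⟩, hAeq⟩
      obtain ⟨h1, h2, h3⟩ := Stmt11Aux.forward_dir f hf A U hfwd n hn1 htrap hAeq
      exact ⟨closure U, h1, h2, h3⟩
    · rintro ⟨N, hNc, hAN, hno⟩
      exact Stmt11Aux.backward_dir f hf A hinv N hNc hAN hno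
  · intro N _hNc hAN hno
    exact Stmt11Aux.part2 f A hinv N hAN hno
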